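/- Suppose Assumption A4 holds. If there exist δ > 0 and T > 0 such that for every t0 ≥ 0 the graph G([t0, t0+T], δ) has a spanning tree, then there exist δ₁ > 0 and T₁ > 0 (one may take T₁ = (m−1)T) such that for every t0 ≥ 0 the solution matrix V(t0+T₁, t0) is δ₁-scrambling, i.e. η(V(t0+T₁, t0)) > δ₁. -/

import Mathlib

open MeasureTheory Set Filter

section Aux

variable {m : ℕ} {L : ℝ → Matrix (Fin m) (Fin m) ℝ} {M₁ : ℝ}
  {V : ℝ → ℝ → Matrix (Fin m) (Fin m) ℝ}

lemma lint (hmeas : ∀ i j, Measurable fun t => L t i j)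
    (hbdd : ∀ t, 0 ≤ t → ∀ i j, |L t i j| ≤ M₁)
    {a b : ℝ} (ha : 0 ≤ a) (hab : a ≤ b) (i j : Fin m) :
    IntervalIntegrable (fun τ => L τ i j) volume a b := by
  rw [intervalIntegrable_iff]
  haveI : IsFiniteMeasure (volume.restrict (Set.uIoc a b)) := by
    constructor
    rw [MeasureTheory.Measure.restrict_apply_univ]
    exact measure_Ioc_lt_top
  refine ⟨((hmeas i j).aestronglyMeasurable).restrict, ?_⟩
  apply MeasureTheory.HasFiniteIntegral.of_bounded (C := M₁)
  rw [MeasureTheory.ae_restrict_iff' measurableSet_uIoc]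
  filter_upwards with x hx
  have hx0 : 0 ≤ x := by
    rw [Set.uIoc_of_le hab] at hx
    exact le_trans ha hx.1.le
  simpa [Real.norm_eq_abs] using hbdd x hx0 i j

/-- continuity of V in its first argument on `Ici t0` -/
lemma vcont (hVd : ∀ t0, 0 ≤ t0 → ∀ t ∈ Set.Ici t0, ∀ i j,
      HasDerivAt (fun τ => V τ t0 i j) (∑ k, L t i k * V t t0 k j) t)
    {t0 : ℝ} (ht0 : 0 ≤ t0) (i j : Fin m) {t : ℝ} (ht : t0 ≤ t) :
    ContinuousAt (fun τ => V τ t0 i j) t :=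
  (hVd t0 ht0 t ht i j).continuousAt

/-- the basic derivative of exp(M₁ τ) * V τ t0 i j -/
lemma vexp_deriv (hVd : ∀ t0, 0 ≤ t0 → ∀ t ∈ Set.Ici t0, ∀ i j,
      HasDerivAt (fun τ => V τ t0 i j) (∑ k, L t i k * V t t0 k j) t)
    {t0 : ℝ} (ht0 : 0 ≤ t0) (i j : Fin m) {t : ℝ} (ht : t0 ≤ t) :
    HasDerivAt (fun τ => Real.exp (M₁ * τ) * V τ t0 i j)
      (Real.exp (M₁ * t) * M₁ * V t t0 i j
        + Real.exp (M₁ * t) * ∑ k, L t i k * V t t0 k j) t := by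
  have h1 : HasDerivAt (fun τ : ℝ => M₁ * τ) M₁ t := by
    simpa using (hasDerivAt_id t).const_mul M₁
  exact (h1.exp).mul (hVd t0 ht0 t ht i j)

/-- FTC -/
lemma vexp_ftc (hmeas : ∀ i j, Measurable fun t => L t i j)
    (hbdd : ∀ t, 0 ≤ t → ∀ i j, |L t i j| ≤ M₁)
    (hVd : ∀ t0, 0 ≤ t0 → ∀ t ∈ Set.Ici t0, ∀ i j,
      HasDerivAt (fun τ => V τ t0 i j) (∑ k, L t i k * V t t0 k j) t)
    {t0 s t : ℝ} (ht0 : 0 ≤ t0) (hs : t0 ≤ s) (hst : s ≤ t) (i j : Fin m) :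
    ∫ τ in s..t, (Real.exp (M₁ * τ) * M₁ * V τ t0 i j
        + Real.exp (M₁ * τ) * ∑ k, L τ i k * V τ t0 k j)
      = Real.exp (M₁ * t) * V t t0 i j - Real.exp (M₁ * s) * V s t0 i j := by
  have huIcc : Set.uIcc s t = Set.Icc s t := Set.uIcc_of_le hst
  have hVcont : ∀ (a b : Fin m), ContinuousOn (fun τ => V τ t0 a b) (Set.Icc s t) :=
    fun a b x hx => (vcont hVd ht0 a b (le_trans hs hx.1)).continuousWithinAt
  have hexpcont : Continuous (fun τ : ℝ => Real.exp (M₁ * τ)) :=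
    Real.continuous_exp.comp (continuous_const.mul continuous_id)
  apply intervalIntegral.integral_eq_sub_of_hasDerivAt
    (f := fun τ => Real.exp (M₁ * τ) * V τ t0 i j)
    (f' := fun τ => Real.exp (M₁ * τ) * M₁ * V τ t0 i j
        + Real.exp (M₁ * τ) * ∑ k, L τ i k * V τ t0 k j)
  · intro x hx
    rw [huIcc] at hx
    exact vexp_deriv hVd ht0 i j (le_trans hs hx.1)
  · have h1 : IntervalIntegrable (fun τ => Real.exp (M₁ * τ) * M₁ * V τ t0 i j)
        volume s t := by
      apply ContinuousOn.intervalIntegrable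
      rw [huIcc]
      exact ((hexpcont.continuousOn.mul continuousOn_const).mul (hVcont i j))
    have h2 : IntervalIntegrable (fun τ => ∑ k, L τ i k * (Real.exp (M₁ * τ) * V τ t0 k j))
        volume s t := by
      have h := IntervalIntegrable.sum (μ := volume) (a := s) (b := t) Finset.univ
        (f := fun (k : Fin m) (τ : ℝ) => L τ i k * (Real.exp (M₁ * τ) * V τ t0 k j))
        (by
          intro k _
          apply (lint hmeas hbdd (le_trans ht0 hs) hst i k).mul_continuousOn
          rw [huIcc]
          exact hexpcont.continuousOn.mul (hVcont k j))
      simpa [Finset.sum_fn] using h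
    have h3 := h1.add h2
    have heq : (fun τ => (Real.exp (M₁ * τ) * M₁ * V τ t0 i j
        + Real.exp (M₁ * τ) * ∑ k, L τ i k * V τ t0 k j))
        = fun τ => (Real.exp (M₁ * τ) * M₁ * V τ t0 i j
        + ∑ k, L τ i k * (Real.exp (M₁ * τ) * V τ t0 k j)) := by
      funext τ
      rw [Finset.mul_sum]
      congr 1
      apply Finset.sum_congr rfl
      intro k _
      ring
    rw [heq]
    exact h3

end Aux

section Aux2

variable {m : ℕ} {L : ℝ → Matrix (Fin m) (Fin m) ℝ} {M₁ : ℝ}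
  {V : ℝ → ℝ → Matrix (Fin m) (Fin m) ℝ}

lemma vnonneg (hM₁ : 0 < M₁)
    (hoff : ∀ t, 0 ≤ t → ∀ i j, i ≠ j → 0 ≤ L t i j)
    (hdiag : ∀ t, 0 ≤ t → ∀ i, L t i i = -∑ j ∈ ({i}ᶜ : Finset (Fin m)), L t i j)
    (hbdd : ∀ t, 0 ≤ t → ∀ i j, |L t i j| ≤ M₁)
    (hV0 : ∀ t0, 0 ≤ t0 → V t0 t0 = 1)
    (hVd : ∀ t0, 0 ≤ t0 → ∀ t ∈ Set.Ici t0, ∀ i j,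
      HasDerivAt (fun τ => V τ t0 i j) (∑ k, L t i k * V t t0 k j) t)
    {t0 : ℝ} (ht0 : 0 ≤ t0) {t : ℝ} (ht : t0 ≤ t) (i j : Fin m) :
    0 ≤ V t t0 i j := by
  set K : ℝ := M₁ * m + 1 with hK
  have hKpos : 0 < K := by positivity
  set E : ℝ → ℝ := fun u => Real.exp (K * (u - t0)) with hE
  have hEpos : ∀ u, 0 < E u := fun u => Real.exp_pos _
  -- the key claim
  have main : ∀ ε > (0:ℝ), ∀ u ∈ Set.Icc t0 t, ∀ a b : Fin m, 0 < V u t0 a b + ε * E u := by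
    intro ε hε
    by_contra hcon
    push_neg at hcon
    obtain ⟨u₀, hu₀, a₀, b₀, hab₀⟩ := hcon
    set g : Fin m → Fin m → ℝ → ℝ := fun a b u => V (max u t0) t0 a b + ε * E u with hg
    have hgcont : ∀ a b, Continuous (g a b) := by
      intro a b
      apply Continuous.add
      · have h1 : ContinuousOn (fun τ => V τ t0 a b) (Set.Ici t0) :=
          fun x hx => (vcont hVd ht0 a b hx).continuousWithinAt
        exact h1.comp_continuous (continuous_id.max continuous_const)
          (fun x => Set.mem_Ici.mpr (le_max_right _ _))
      · exact continuous_const.mul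
          (Real.continuous_exp.comp (continuous_const.mul (continuous_id.sub continuous_const)))
    have hgV : ∀ (a b : Fin m) (u : ℝ), t0 ≤ u → g a b u = V u t0 a b + ε * E u := by
      intro a b u hu
      simp only [hg, max_eq_left hu]
    set S : Set ℝ := Set.Icc t0 t ∩ ⋃ (a : Fin m), ⋃ (b : Fin m), {u | g a b u ≤ 0} with hS
    have hSne : S.Nonempty := by
      refine ⟨u₀, hu₀, ?_⟩
      simp only [Set.mem_iUnion, Set.mem_setOf_eq]
      exact ⟨a₀, b₀, by rw [hgV a₀ b₀ u₀ hu₀.1]; exact hab₀⟩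
    have hSclosed : IsClosed S :=
      isClosed_Icc.inter (isClosed_iUnion_of_finite fun a =>
        isClosed_iUnion_of_finite fun b => isClosed_le (hgcont a b) continuous_const)
    have hSbdd : BddBelow S := ⟨t0, fun u hu => hu.1.1⟩
    set τ := sInf S with hτ
    have hτS : τ ∈ S := hSclosed.csInf_mem hSne hSbdd
    obtain ⟨hτIcc, hex⟩ := hτS
    have hτ0 : (0:ℝ) ≤ τ := le_trans ht0 hτIcc.1
    obtain ⟨a, b, hab⟩ : ∃ a b : Fin m, g a b τ ≤ 0 := by
      simpa only [Set.mem_iUnion, Set.mem_setOf_eq] using hex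
    have hone : ∀ a b : Fin m, (0:ℝ) ≤ (1 : Matrix (Fin m) (Fin m) ℝ) a b := by
      intro a b
      rw [Matrix.one_apply]
      split <;> norm_num
    have hτt0 : t0 < τ := by
      rcases eq_or_lt_of_le hτIcc.1 with h | h
      · exfalso
        have : g a b τ = V t0 t0 a b + ε * E τ := by
          rw [hgV a b τ hτIcc.1, ← h]
        rw [hV0 t0 ht0] at this
        have h2 := hone a b
        have h3 := hEpos τ
        nlinarith
      · exact h
    have hpos : ∀ u, t0 ≤ u → u < τ → ∀ a' b', 0 < g a' b' u := by
      intro u hu1 hu2 a' b'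
      by_contra hcon2
      push_neg at hcon2
      have : u ∈ S := by
        refine ⟨⟨hu1, le_trans hu2.le hτIcc.2⟩, ?_⟩
        simp only [Set.mem_iUnion, Set.mem_setOf_eq]
        exact ⟨a', b', hcon2⟩
      exact notMem_of_lt_csInf hu2 hSbdd this
    haveI : (nhdsWithin τ (Set.Iio τ)).NeBot := nhdsLT_neBot_of_exists_lt ⟨τ - 1, by linarith⟩
    have hge : ∀ a' b', 0 ≤ g a' b' τ := by
      intro a' b'
      refine ge_of_tendsto ((hgcont a' b').continuousAt.tendsto.mono_left
        (nhdsWithin_le_nhds : nhdsWithin τ (Set.Iio τ) ≤ _)) ?_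
      filter_upwards [Ioo_mem_nhdsLT_of_mem (⟨hτt0, le_refl τ⟩ : τ ∈ Set.Ioc t0 τ)] with u hu
      exact (hpos u hu.1.le hu.2 a' b').le
    have hzero : g a b τ = 0 := le_antisymm hab (hge a b)
    have hVτ : V τ t0 a b = -(ε * E τ) := by
      have := hgV a b τ hτIcc.1
      rw [hzero] at this
      linarith
    have hVk : ∀ k, -(ε * E τ) ≤ V τ t0 k b := by
      intro k
      have h1 := hge k b
      rw [hgV k b τ hτIcc.1] at h1
      linarith
    -- derivative
    have hEd : HasDerivAt E (K * E τ) τ := by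
      have h1 : HasDerivAt (fun u : ℝ => K * (u - t0)) K τ := by
        simpa using ((hasDerivAt_id τ).sub_const t0).const_mul K
      simpa [hE, mul_comm] using h1.exp
    set D : ℝ := (∑ k, L τ a k * V τ t0 k b) + ε * (K * E τ) with hD
    have hyd : HasDerivAt (fun u => V u t0 a b + ε * E u) D τ :=
      (hVd t0 ht0 τ hτIcc.1 a b).add (hEd.const_mul ε)
    -- D is positive
    have hDpos : 0 < D := by
      have hLaa : L τ a a ≤ 0 := by
        rw [hdiag τ hτ0 a]
        simp only [neg_nonpos]
        exact Finset.sum_nonneg fun k hk =>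
          hoff τ hτ0 a k (fun hc => by simp [hc] at hk)
      have h1 : 0 ≤ L τ a a * V τ t0 a b := by
        rw [hVτ]
        have hEτ := hEpos τ
        have h0 : 0 ≤ (-(L τ a a)) * (ε * E τ) :=
          mul_nonneg (by linarith) (by positivity)
        nlinarith [h0]
      have h2 : ∀ k ∈ ({a}ᶜ : Finset (Fin m)), -(M₁ * (ε * E τ)) ≤ L τ a k * V τ t0 k b := by
        intro k hk
        have hka : a ≠ k := by
          intro hc
          simp [hc] at hk
        have hL0 : 0 ≤ L τ a k := hoff τ hτ0 a k hka
        have hLM : L τ a k ≤ M₁ := (abs_le.mp (hbdd τ hτ0 a k)).2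
        have hVb := hVk k
        have hEτ := hEpos τ
        have hεE : 0 ≤ ε * E τ := by positivity
        nlinarith [mul_le_mul_of_nonneg_left hVb hL0, mul_le_mul_of_nonneg_right hLM hεE]
      have h3 : -((m:ℝ) * (M₁ * (ε * E τ))) ≤ ∑ k ∈ ({a}ᶜ : Finset (Fin m)), L τ a k * V τ t0 k b := by
        have h4 := Finset.sum_le_sum h2
        rw [Finset.sum_const] at h4
        have h5 : (({a}ᶜ : Finset (Fin m)).card : ℝ) ≤ (m:ℝ) := by
          have := Finset.card_le_univ ({a}ᶜ : Finset (Fin m))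
          simp only [Finset.card_univ, Fintype.card_fin] at this
          exact_mod_cast this
        have h6 : 0 ≤ M₁ * (ε * E τ) := by
          have := hEpos τ
          positivity
        have h7 : (({a}ᶜ : Finset (Fin m)).card : ℝ) • (-(M₁ * (ε * E τ)))
            = -((({a}ᶜ : Finset (Fin m)).card : ℝ) * (M₁ * (ε * E τ))) := by
          rw [smul_eq_mul]; ring
        rw [nsmul_eq_mul] at h4
        nlinarith [h4]
      have hsplit : ∑ k, L τ a k * V τ t0 k b
          = L τ a a * V τ t0 a b + ∑ k ∈ ({a}ᶜ : Finset (Fin m)), L τ a k * V τ t0 k b :=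
        Fintype.sum_eq_add_sum_compl a _
      have hEτ := hEpos τ
      rw [hD, hsplit, hK]
      nlinarith
    -- slope at τ from the left is ≤ 0
    have hslope : Filter.Tendsto (slope (fun u => V u t0 a b + ε * E u) τ)
        (nhdsWithin τ (Set.Iio τ)) (nhds D) :=
      (hasDerivAt_iff_tendsto_slope.mp hyd).mono_left
        (nhdsWithin_mono τ fun x hx => ne_of_lt hx)
    have hyτ : V τ t0 a b + ε * E τ = 0 := by
      rw [← hgV a b τ hτIcc.1]; exact hzero
    have hDle : D ≤ 0 := by
      refine le_of_tendsto hslope ?_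
      filter_upwards [Ioo_mem_nhdsLT_of_mem (⟨hτt0, le_refl τ⟩ : τ ∈ Set.Ioc t0 τ)] with u hu
      rw [slope_def_field]
      have hy : 0 ≤ V u t0 a b + ε * E u := by
        have := hpos u hu.1.le hu.2 a b
        rw [hgV a b u hu.1.le] at this
        linarith
      rw [hyτ]
      apply div_nonpos_of_nonneg_of_nonpos
      · linarith
      · linarith [hu.2]
    linarith
  -- conclude
  by_contra hneg
  push_neg at hneg
  have hEt := hEpos t
  set ε : ℝ := (-(V t t0 i j)) / (2 * E t) with hε
  have hεpos : 0 < ε := by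
    apply div_pos (by linarith) (by linarith)
  have h := main ε hεpos t ⟨ht, le_refl t⟩ i j
  have : ε * E t = -(V t t0 i j) / 2 := by
    rw [hε]
    field_simp
  rw [this] at h
  linarith

end Aux2

section Aux3

variable {m : ℕ} {L : ℝ → Matrix (Fin m) (Fin m) ℝ} {M₁ : ℝ}
  {V : ℝ → ℝ → Matrix (Fin m) (Fin m) ℝ}

lemma vexp_integrable (hmeas : ∀ i j, Measurable fun t => L t i j)
    (hbdd : ∀ t, 0 ≤ t → ∀ i j, |L t i j| ≤ M₁)
    (hVd : ∀ t0, 0 ≤ t0 → ∀ t ∈ Set.Ici t0, ∀ i j,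
      HasDerivAt (fun τ => V τ t0 i j) (∑ k, L t i k * V t t0 k j) t)
    {t0 s t : ℝ} (ht0 : 0 ≤ t0) (hs : t0 ≤ s) (hst : s ≤ t) (i j : Fin m) :
    IntervalIntegrable (fun τ => (Real.exp (M₁ * τ) * M₁ * V τ t0 i j
        + Real.exp (M₁ * τ) * ∑ k, L τ i k * V τ t0 k j)) volume s t := by
  have huIcc : Set.uIcc s t = Set.Icc s t := Set.uIcc_of_le hst
  have hVcont : ∀ (a b : Fin m), ContinuousOn (fun τ => V τ t0 a b) (Set.Icc s t) :=
    fun a b x hx => (vcont hVd ht0 a b (le_trans hs hx.1)).continuousWithinAt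
  have hexpcont : Continuous (fun τ : ℝ => Real.exp (M₁ * τ)) :=
    Real.continuous_exp.comp (continuous_const.mul continuous_id)
  have h1 : IntervalIntegrable (fun τ => Real.exp (M₁ * τ) * M₁ * V τ t0 i j)
      volume s t := by
    apply ContinuousOn.intervalIntegrable
    rw [huIcc]
    exact ((hexpcont.continuousOn.mul continuousOn_const).mul (hVcont i j))
  have h2 : IntervalIntegrable (fun τ => ∑ k, L τ i k * (Real.exp (M₁ * τ) * V τ t0 k j))
      volume s t := by
    have h := IntervalIntegrable.sum (μ := volume) (a := s) (b := t) Finset.univ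
      (f := fun (k : Fin m) (τ : ℝ) => L τ i k * (Real.exp (M₁ * τ) * V τ t0 k j))
      (by
        intro k _
        apply (lint hmeas hbdd (le_trans ht0 hs) hst i k).mul_continuousOn
        rw [huIcc]
        exact hexpcont.continuousOn.mul (hVcont k j))
    simpa [Finset.sum_fn] using h
  have h3 := h1.add h2
  have heq : (fun τ => (Real.exp (M₁ * τ) * M₁ * V τ t0 i j
      + Real.exp (M₁ * τ) * ∑ k, L τ i k * V τ t0 k j))
      = fun τ => (Real.exp (M₁ * τ) * M₁ * V τ t0 i j
      + ∑ k, L τ i k * (Real.exp (M₁ * τ) * V τ t0 k j)) := by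
    funext τ
    rw [Finset.mul_sum]
    congr 1
    apply Finset.sum_congr rfl
    intro k _
    ring
  rw [heq]
  exact h3

lemma vmono (hM₁ : 0 < M₁)
    (hmeas : ∀ i j, Measurable fun t => L t i j)
    (hoff : ∀ t, 0 ≤ t → ∀ i j, i ≠ j → 0 ≤ L t i j)
    (hdiag : ∀ t, 0 ≤ t → ∀ i, L t i i = -∑ j ∈ ({i}ᶜ : Finset (Fin m)), L t i j)
    (hbdd : ∀ t, 0 ≤ t → ∀ i j, |L t i j| ≤ M₁)
    (hV0 : ∀ t0, 0 ≤ t0 → V t0 t0 = 1)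
    (hVd : ∀ t0, 0 ≤ t0 → ∀ t ∈ Set.Ici t0, ∀ i j,
      HasDerivAt (fun τ => V τ t0 i j) (∑ k, L t i k * V t t0 k j) t)
    {t0 s t : ℝ} (ht0 : 0 ≤ t0) (hs : t0 ≤ s) (hst : s ≤ t) (i j : Fin m) :
    Real.exp (M₁ * s) * V s t0 i j ≤ Real.exp (M₁ * t) * V t t0 i j := by
  have hftc := vexp_ftc hmeas hbdd hVd ht0 hs hst i j
  have hnn : 0 ≤ ∫ τ in s..t, (Real.exp (M₁ * τ) * M₁ * V τ t0 i j
      + Real.exp (M₁ * τ) * ∑ k, L τ i k * V τ t0 k j) := by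
    apply intervalIntegral.integral_nonneg hst
    intro u hu
    have hu0 : t0 ≤ u := le_trans hs hu.1
    have hu00 : (0:ℝ) ≤ u := le_trans ht0 hu0
    have hVnn : ∀ a b : Fin m, 0 ≤ V u t0 a b :=
      fun a b => vnonneg hM₁ hoff hdiag hbdd hV0 hVd ht0 hu0 a b
    have hsum : -(M₁ * V u t0 i j) ≤ ∑ k, L u i k * V u t0 k j := by
      rw [Fintype.sum_eq_add_sum_compl i]
      have h1 : -M₁ ≤ L u i i := (abs_le.mp (hbdd u hu00 i i)).1
      have h2 : (-M₁) * V u t0 i j ≤ L u i i * V u t0 i j :=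
        mul_le_mul_of_nonneg_right h1 (hVnn i j)
      have h3 : 0 ≤ ∑ k ∈ ({i}ᶜ : Finset (Fin m)), L u i k * V u t0 k j := by
        apply Finset.sum_nonneg
        intro k hk
        have hik : i ≠ k := fun hc => by simp [hc] at hk
        exact mul_nonneg (hoff u hu00 i k hik) (hVnn k j)
      nlinarith
    have hexp : (0:ℝ) ≤ Real.exp (M₁ * u) := (Real.exp_pos _).le
    have h4 : 0 ≤ M₁ * V u t0 i j + ∑ k, L u i k * V u t0 k j := by linarith
    nlinarith [mul_nonneg hexp h4]
  linarith [hftc ▸ hnn]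

lemma vmono' (hM₁ : 0 < M₁)
    (hmeas : ∀ i j, Measurable fun t => L t i j)
    (hoff : ∀ t, 0 ≤ t → ∀ i j, i ≠ j → 0 ≤ L t i j)
    (hdiag : ∀ t, 0 ≤ t → ∀ i, L t i i = -∑ j ∈ ({i}ᶜ : Finset (Fin m)), L t i j)
    (hbdd : ∀ t, 0 ≤ t → ∀ i j, |L t i j| ≤ M₁)
    (hV0 : ∀ t0, 0 ≤ t0 → V t0 t0 = 1)
    (hVd : ∀ t0, 0 ≤ t0 → ∀ t ∈ Set.Ici t0, ∀ i j,
      HasDerivAt (fun τ => V τ t0 i j) (∑ k, L t i k * V t t0 k j) t)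
    {t0 s t : ℝ} (ht0 : 0 ≤ t0) (hs : t0 ≤ s) (hst : s ≤ t) (i j : Fin m) :
    Real.exp (-(M₁ * (t - s))) * V s t0 i j ≤ V t t0 i j := by
  have h := vmono hM₁ hmeas hoff hdiag hbdd hV0 hVd ht0 hs hst i j
  have hp : (0:ℝ) < Real.exp (M₁ * t) := Real.exp_pos _
  have he : Real.exp (M₁ * t) * (Real.exp (-(M₁ * (t - s))) * V s t0 i j)
      = Real.exp (M₁ * s) * V s t0 i j := by
    rw [← mul_assoc, ← Real.exp_add]
    congr 2
    ring
  exact (mul_le_mul_iff_right₀ hp).mp (by rw [he]; exact h)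

end Aux3

section Aux4

variable {m : ℕ} {L : ℝ → Matrix (Fin m) (Fin m) ℝ} {M₁ : ℝ}
  {V : ℝ → ℝ → Matrix (Fin m) (Fin m) ℝ}

lemma vedge (hM₁ : 0 < M₁)
    (hmeas : ∀ i j, Measurable fun t => L t i j)
    (hoff : ∀ t, 0 ≤ t → ∀ i j, i ≠ j → 0 ≤ L t i j)
    (hdiag : ∀ t, 0 ≤ t → ∀ i, L t i i = -∑ j ∈ ({i}ᶜ : Finset (Fin m)), L t i j)
    (hbdd : ∀ t, 0 ≤ t → ∀ i j, |L t i j| ≤ M₁)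
    (hV0 : ∀ t0, 0 ≤ t0 → V t0 t0 = 1)
    (hVd : ∀ t0, 0 ≤ t0 → ∀ t ∈ Set.Ici t0, ∀ i j,
      HasDerivAt (fun τ => V τ t0 i j) (∑ k, L t i k * V t t0 k j) t)
    {t0 s T δ : ℝ} (ht0 : 0 ≤ t0) (hs : t0 ≤ s) (hT : 0 < T) (hδ : 0 < δ)
    {a b : Fin m} (hedge : δ < ∫ τ in s..(s + T), L τ b a) (j : Fin m) :
    δ * Real.exp (-(M₁ * T)) * V s t0 a j ≤ V (s + T) t0 b j := by
  have hst : s ≤ s + T := by linarith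
  have hs0 : (0:ℝ) ≤ s := le_trans ht0 hs
  -- a ≠ b
  have hab : a ≠ b := by
    intro hc
    subst hc
    have h1 : 0 ≤ ∫ τ in s..(s + T), -(L τ a a) := by
      apply intervalIntegral.integral_nonneg hst
      intro u hu
      have hu0 : (0:ℝ) ≤ u := le_trans hs0 hu.1
      rw [hdiag u hu0 a]
      simp only [neg_neg]
      exact Finset.sum_nonneg fun k hk =>
        hoff u hu0 a k (fun hc2 => by simp [hc2] at hk)
    rw [intervalIntegral.integral_neg] at h1
    linarith
  have hVnn : ∀ u, t0 ≤ u → ∀ p q : Fin m, 0 ≤ V u t0 p q :=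
    fun u hu p q => vnonneg hM₁ hoff hdiag hbdd hV0 hVd ht0 hu p q
  have hftc := vexp_ftc hmeas hbdd hVd ht0 hs hst b j
  set C : ℝ := Real.exp (M₁ * s) * V s t0 a j with hC
  have hCnn : 0 ≤ C := mul_nonneg (Real.exp_pos _).le (hVnn s hs a j)
  have hmono : ∫ τ in s..(s + T), L τ b a * C
      ≤ ∫ τ in s..(s + T), (Real.exp (M₁ * τ) * M₁ * V τ t0 b j
        + Real.exp (M₁ * τ) * ∑ k, L τ b k * V τ t0 k j) := by
    apply intervalIntegral.integral_mono_on hst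
      ((lint hmeas hbdd hs0 hst b a).mul_const C)
      (vexp_integrable hmeas hbdd hVd ht0 hs hst b j)
    intro u hu
    have hu0 : t0 ≤ u := le_trans hs hu.1
    have hu00 : (0:ℝ) ≤ u := le_trans ht0 hu0
    have hL0 : 0 ≤ L u b a := hoff u hu00 b a (Ne.symm hab)
    have hVa : Real.exp (-(M₁ * (u - s))) * V s t0 a j ≤ V u t0 a j :=
      vmono' hM₁ hmeas hoff hdiag hbdd hV0 hVd ht0 hs hu.1 a j
    have hexpu : (0:ℝ) < Real.exp (M₁ * u) := Real.exp_pos _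
    -- key chain
    have he1 : L u b a * C = Real.exp (M₁ * u)
        * (L u b a * (Real.exp (-(M₁ * (u - s))) * V s t0 a j)) := by
      rw [hC]
      have : Real.exp (M₁ * u) * Real.exp (-(M₁ * (u - s))) = Real.exp (M₁ * s) := by
        rw [← Real.exp_add]; congr 1; ring
      linear_combination (-(L u b a * V s t0 a j)) * this
    have he2 : Real.exp (M₁ * u) * (L u b a * (Real.exp (-(M₁ * (u - s))) * V s t0 a j))
        ≤ Real.exp (M₁ * u) * (L u b a * V u t0 a j) := by
      apply mul_le_mul_of_nonneg_left _ hexpu.le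
      exact mul_le_mul_of_nonneg_left hVa hL0
    have hsum : L u b a * V u t0 a j
        ≤ M₁ * V u t0 b j + ∑ k, L u b k * V u t0 k j := by
      rw [Fintype.sum_eq_add_sum_compl b]
      have h1 : -M₁ ≤ L u b b := (abs_le.mp (hbdd u hu00 b b)).1
      have h2 : (-M₁) * V u t0 b j ≤ L u b b * V u t0 b j :=
        mul_le_mul_of_nonneg_right h1 (hVnn u hu0 b j)
      have h3 : L u b a * V u t0 a j ≤ ∑ k ∈ ({b}ᶜ : Finset (Fin m)), L u b k * V u t0 k j := by
        apply Finset.single_le_sum (f := fun k => L u b k * V u t0 k j)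
        · intro k hk
          have hbk : b ≠ k := fun hc => by simp [hc] at hk
          exact mul_nonneg (hoff u hu00 b k hbk) (hVnn u hu0 k j)
        · simp [Finset.mem_compl, hab]
      nlinarith
    have he3 : Real.exp (M₁ * u) * (L u b a * V u t0 a j)
        ≤ Real.exp (M₁ * u) * M₁ * V u t0 b j
          + Real.exp (M₁ * u) * ∑ k, L u b k * V u t0 k j := by
      nlinarith [mul_le_mul_of_nonneg_left hsum hexpu.le]
    linarith [he1 ▸ le_trans he2 he3]
  have hintc : ∫ τ in s..(s + T), L τ b a * C = (∫ τ in s..(s + T), L τ b a) * C :=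
    intervalIntegral.integral_mul_const C _
  have hδC : δ * C ≤ (∫ τ in s..(s + T), L τ b a) * C :=
    mul_le_mul_of_nonneg_right hedge.le hCnn
  have hbase : 0 ≤ Real.exp (M₁ * s) * V s t0 b j :=
    mul_nonneg (Real.exp_pos _).le (hVnn s hs b j)
  -- combine
  have hfinal : δ * C ≤ Real.exp (M₁ * (s + T)) * V (s + T) t0 b j := by
    rw [hintc] at hmono
    linarith [hftc ▸ hmono]
  have hp : (0:ℝ) < Real.exp (M₁ * (s + T)) := Real.exp_pos _
  have hkey : Real.exp (M₁ * (s + T)) * (δ * Real.exp (-(M₁ * T)) * V s t0 a j) = δ * C := by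
    rw [hC]
    have : Real.exp (M₁ * (s + T)) * Real.exp (-(M₁ * T)) = Real.exp (M₁ * s) := by
      rw [← Real.exp_add]; congr 1; ring
    linear_combination (δ * V s t0 a j) * this
  exact (mul_le_mul_iff_right₀ hp).mp (by rw [hkey]; exact hfinal)

end Aux4

section Comb

/-- temporal reachability: `ReachN H n x y` means there is a walk from `x` at time 0
to `y` at time `n`, where at step `s` one may stay put or use an edge of `H s`. -/
def ReachN {m : ℕ} (H : ℕ → Fin m → Fin m → Prop) : ℕ → Fin m → Fin m → Prop
  | 0 => fun x y => x = y
  | n + 1 => fun x y => ∃ z, ReachN H n x z ∧ (z = y ∨ H n z y)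

lemma reachN_pad {m : ℕ} {H : ℕ → Fin m → Fin m → Prop} {n : ℕ} {x y : Fin m}
    (h : ReachN H n x y) : ReachN H (n + 1) x y := ⟨y, h, Or.inl rfl⟩

open Classical in
/-- one backward step of "in-neighborhood" growth -/
noncomputable def stepB {m : ℕ} (R : Fin m → Fin m → Prop) (S : Finset (Fin m)) :
    Finset (Fin m) :=
  S ∪ Finset.univ.filter fun b => ∃ a ∈ S, R b a

lemma mem_stepB {m : ℕ} {R : Fin m → Fin m → Prop} {S : Finset (Fin m)} {b : Fin m} :
    b ∈ stepB R S ↔ b ∈ S ∨ ∃ a ∈ S, R b a := by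
  classical
  simp [stepB]

lemma subset_stepB {m : ℕ} (R : Fin m → Fin m → Prop) (S : Finset (Fin m)) :
    S ⊆ stepB R S := fun x hx => mem_stepB.mpr (Or.inl hx)

/-- backward reachable sets -/
noncomputable def backs {m : ℕ} (H : ℕ → Fin m → Fin m → Prop) (N : ℕ) (p : Fin m) :
    ℕ → Finset (Fin m)
  | 0 => {p}
  | s + 1 => stepB (H (N - 1 - s)) (backs H N p s)

lemma backs_mono {m : ℕ} (H : ℕ → Fin m → Fin m → Prop) (N : ℕ) (p : Fin m) {s s' : ℕ}
    (h : s ≤ s') : backs H N p s ⊆ backs H N p s' := by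
  induction s' with
  | zero => simpa [Nat.le_zero.mp h] using Finset.Subset.refl _
  | succ n ih =>
    rcases Nat.lt_or_ge s (n+1) with h1 | h1
    · exact fun x hx => subset_stepB _ _ (ih (Nat.lt_succ_iff.mp h1) hx)
    · have : s = n + 1 := le_antisymm h h1
      subst this
      exact Finset.Subset.refl _

lemma self_mem_backs {m : ℕ} (H : ℕ → Fin m → Fin m → Prop) (N : ℕ) (p : Fin m) (s : ℕ) :
    p ∈ backs H N p s :=
  backs_mono H N p (Nat.zero_le s) (by simp [backs])

/-- bridge: a member of `backs H N p s` that is temporally reachable by time `N - s`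
yields temporal reachability of `p` by time `N`. -/
lemma backs_bridge {m : ℕ} (H : ℕ → Fin m → Fin m → Prop) (N : ℕ) (p : Fin m) :
    ∀ s, s ≤ N → ∀ k ∈ backs H N p s, ∀ j : Fin m,
      ReachN H (N - s) j k → ReachN H N j p := by
  intro s
  induction s with
  | zero =>
    intro _ k hk j hr
    have : k = p := by simpa [backs] using hk
    subst this
    simpa using hr
  | succ n ih =>
    intro hn k hk j hr
    have hnN : n ≤ N := le_trans (Nat.le_succ n) hn
    have hidx : N - n = (N - (n + 1)) + 1 := by omega
    rcases mem_stepB.mp hk with hk1 | ⟨a, ha, hR⟩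
    · apply ih hnN k hk1 j
      rw [hidx]
      exact reachN_pad hr
    · apply ih hnN a ha j
      rw [hidx]
      have hidx2 : N - 1 - n = N - (n + 1) := by omega
      exact ⟨k, hr, Or.inr (hidx2 ▸ hR)⟩

/-- if a set is closed under predecessors of a rooted relation, it contains the root -/
lemma root_mem_of_closed {m : ℕ} {R : Fin m → Fin m → Prop} {S : Finset (Fin m)}
    (hclosed : ∀ a ∈ S, ∀ b, R b a → b ∈ S) {r x : Fin m}
    (hx : x ∈ S) (hr : Relation.ReflTransGen R r x) : r ∈ S := by
  induction hr using Relation.ReflTransGen.head_induction_on with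
  | refl => exact hx
  | head h' _ ih => exact hclosed _ ih _ h'

lemma exists_common_ancestor {m : ℕ} (hm : 0 < m) (H : ℕ → Fin m → Fin m → Prop)
    (hroot : ∀ n, ∃ r : Fin m, ∀ i, Relation.ReflTransGen (H n) r i) (p q : Fin m) :
    ∃ k : Fin m, ReachN H (2 * m - 1) k p ∧ ReachN H (2 * m - 1) k q := by
  classical
  set N : ℕ := 2 * m - 1 with hN
  set P : ℕ → Finset (Fin m) := backs H N p with hP
  set Q : ℕ → Finset (Fin m) := backs H N q with hQ
  have claim : ∀ s, (∃ k, k ∈ P s ∧ k ∈ Q s) ∨ s + 2 ≤ (P s).card + (Q s).card := by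
    intro s
    induction s with
    | zero =>
      right
      simp [hP, hQ, backs]
    | succ n ih =>
      by_cases hint : ∃ k, k ∈ P (n+1) ∧ k ∈ Q (n+1)
      · exact Or.inl hint
      · right
        push_neg at hint
        rcases ih with ⟨k, hk1, hk2⟩ | hsize
        · exact (hint k (backs_mono H N p (Nat.le_succ n) hk1)
            (backs_mono H N q (Nat.le_succ n) hk2)).elim
        · -- at least one of the two sets grows
          have hgrow : P (n+1) ≠ P n ∨ Q (n+1) ≠ Q n := by
            by_contra hc
            push_neg at hc
            obtain ⟨r, hr⟩ := hroot (N - 1 - n)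
            have hclP : ∀ a ∈ P n, ∀ b, H (N - 1 - n) b a → b ∈ P n := by
              intro a ha b hb
              rw [← hc.1]
              exact mem_stepB.mpr (Or.inr ⟨a, ha, hb⟩)
            have hclQ : ∀ a ∈ Q n, ∀ b, H (N - 1 - n) b a → b ∈ Q n := by
              intro a ha b hb
              rw [← hc.2]
              exact mem_stepB.mpr (Or.inr ⟨a, ha, hb⟩)
            have hrP : r ∈ P n :=
              root_mem_of_closed hclP (self_mem_backs H N p n) (hr p)
            have hrQ : r ∈ Q n :=
              root_mem_of_closed hclQ (self_mem_backs H N q n) (hr q)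
            exact hint r (backs_mono H N p (Nat.le_succ n) hrP)
              (backs_mono H N q (Nat.le_succ n) hrQ)
          have hPsub : P n ⊆ P (n+1) := backs_mono H N p (Nat.le_succ n)
          have hQsub : Q n ⊆ Q (n+1) := backs_mono H N q (Nat.le_succ n)
          have hPc : (P n).card ≤ (P (n+1)).card := Finset.card_le_card hPsub
          have hQc : (Q n).card ≤ (Q (n+1)).card := Finset.card_le_card hQsub
          rcases hgrow with hg | hg
          · have : (P n).card < (P (n+1)).card :=
              Finset.card_lt_card (ssubset_of_subset_of_ne hPsub (Ne.symm hg))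
            omega
          · have : (Q n).card < (Q (n+1)).card :=
              Finset.card_lt_card (ssubset_of_subset_of_ne hQsub (Ne.symm hg))
            omega
  rcases claim N with ⟨k, hk1, hk2⟩ | hsize
  · refine ⟨k, ?_, ?_⟩
    · apply backs_bridge H N p N (le_refl N) k hk1 k
      simp [ReachN]
    · apply backs_bridge H N q N (le_refl N) k hk2 k
      simp [ReachN]
  · exfalso
    have h1 : (P N).card ≤ m := by
      have := Finset.card_le_univ (P N)
      simpa using this
    have h2 : (Q N).card ≤ m := by
      have := Finset.card_le_univ (Q N)
      simpa using this
    omega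

end Comb

/-- Lemma 9: under Assumption A4, if for some `δ > 0`, `T > 0` the graph
`G([t0,t0+T],δ)` (edge from `j` to `i` iff `∫ l_ij > δ`) has a spanning tree for every
`t0 ≥ 0`, then there exist `δ₁ > 0` and `T₁ > 0` such that `V(t0+T₁,t0)` is
`δ₁`-scrambling for every `t0 ≥ 0`, i.e. `η(V(t0+T₁,t0)) > δ₁` where
`η(V) = min_{i,j} Σ_k min(v_ik, v_jk)`. -/
theorem stmt_13 (m : ℕ) (hm : 0 < m)
    (L : ℝ → Matrix (Fin m) (Fin m) ℝ) (M₁ : ℝ) (hM₁ : 0 < M₁)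
    (hmeas : ∀ i j, Measurable fun t => L t i j)
    (hoff : ∀ t, 0 ≤ t → ∀ i j, i ≠ j → 0 ≤ L t i j)
    (hdiag : ∀ t, 0 ≤ t → ∀ i, L t i i = -∑ j ∈ ({i}ᶜ : Finset (Fin m)), L t i j)
    (hbdd : ∀ t, 0 ≤ t → ∀ i j, |L t i j| ≤ M₁)
    (V : ℝ → ℝ → Matrix (Fin m) (Fin m) ℝ)
    (hV0 : ∀ t0, 0 ≤ t0 → V t0 t0 = 1)
    (hVd : ∀ t0, 0 ≤ t0 → ∀ t ∈ Set.Ici t0, ∀ i j,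
        HasDerivAt (fun τ => V τ t0 i j) (∑ k, L t i k * V t t0 k j) t)
    (δ T : ℝ) (hδ : 0 < δ) (hT : 0 < T)
    (hspan : ∀ t0, 0 ≤ t0 → ∃ r : Fin m, ∀ i : Fin m,
      Relation.ReflTransGen (fun a b => δ < ∫ τ in t0..(t0 + T), L τ b a) r i) :
    ∃ δ₁ > (0:ℝ), ∃ T₁ > (0:ℝ), ∀ t0, 0 ≤ t0 →
      δ₁ < ⨅ i : Fin m, ⨅ j : Fin m,
        ∑ k, min (V (t0 + T₁) t0 i k) (V (t0 + T₁) t0 j k) := by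

  haveI : Nonempty (Fin m) := ⟨⟨0, hm⟩⟩
  have hN1 : 1 ≤ 2 * m - 1 := by omega
  set c : ℝ := Real.exp (-(M₁ * T)) * min 1 δ with hc
  have hcpos : 0 < c := mul_pos (Real.exp_pos _) (lt_min one_pos hδ)
  have hcE : c ≤ Real.exp (-(M₁ * T)) := by
    have h1 : min 1 δ ≤ 1 := min_le_left _ _
    nlinarith [Real.exp_pos (-(M₁ * T))]
  have hcδ : c ≤ δ * Real.exp (-(M₁ * T)) := by
    have h1 : min 1 δ ≤ δ := min_le_right _ _
    nlinarith [Real.exp_pos (-(M₁ * T))]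
  refine ⟨c ^ (2 * m - 1) / 2, by positivity, ((2 * m - 1 : ℕ) : ℝ) * T, ?_, ?_⟩
  · have : (0:ℝ) < ((2 * m - 1 : ℕ) : ℝ) := by exact_mod_cast hN1
    positivity
  intro t0 ht0
  set H : ℕ → Fin m → Fin m → Prop :=
    fun n x y => δ < ∫ τ in (t0 + n * T)..(t0 + n * T + T), L τ y x with hH
  have hroot : ∀ n : ℕ, ∃ r : Fin m, ∀ i, Relation.ReflTransGen (H n) r i := by
    intro n
    have hnn : (0:ℝ) ≤ t0 + n * T := by positivity
    obtain ⟨r, hr⟩ := hspan (t0 + n * T) hnn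
    exact ⟨r, fun i => hr i⟩
  have key : ∀ n : ℕ, ∀ a k : Fin m, ReachN H n k a → c ^ n ≤ V (t0 + n * T) t0 a k := by
    intro n
    induction n with
    | zero =>
      intro a k hr
      have hka : k = a := hr
      subst hka
      simp only [Nat.cast_zero, zero_mul, add_zero, pow_zero]
      rw [hV0 t0 ht0]
      simp [Matrix.one_apply]
    | succ n ih =>
      intro a k hr
      obtain ⟨z, hz, hstep⟩ := hr
      have hnT : (0:ℝ) ≤ (n:ℝ) * T := by positivity
      have hs : t0 ≤ t0 + n * T := by linarith
      have hcast : t0 + ((n : ℕ) + 1 : ℕ) * T = (t0 + n * T) + T := by push_cast; ring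
      rw [hcast]
      have hexpnn : (0:ℝ) ≤ Real.exp (-(M₁ * T)) := (Real.exp_pos _).le
      have hcn : (0:ℝ) ≤ c ^ n := (pow_pos hcpos n).le
      rcases hstep with hza | hedge
      · subst hza
        have h1 := vmono' hM₁ hmeas hoff hdiag hbdd hV0 hVd ht0 hs
          (by linarith : t0 + n * T ≤ (t0 + n * T) + T) z k
        have he : -(M₁ * (((t0 + n * T) + T) - (t0 + n * T))) = -(M₁ * T) := by ring
        rw [he] at h1
        calc c ^ (n + 1) = c ^ n * c := pow_succ c n
          _ ≤ c ^ n * Real.exp (-(M₁ * T)) := mul_le_mul_of_nonneg_left hcE hcn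
          _ = Real.exp (-(M₁ * T)) * c ^ n := mul_comm _ _
          _ ≤ Real.exp (-(M₁ * T)) * V (t0 + n * T) t0 z k :=
            mul_le_mul_of_nonneg_left (ih z k hz) hexpnn
          _ ≤ V ((t0 + n * T) + T) t0 z k := h1
      · have hedge' : δ < ∫ τ in (t0 + n * T)..((t0 + n * T) + T), L τ a z := hedge
        have h1 := vedge hM₁ hmeas hoff hdiag hbdd hV0 hVd ht0 hs hT hδ hedge' k
        calc c ^ (n + 1) = c ^ n * c := pow_succ c n
          _ ≤ c ^ n * (δ * Real.exp (-(M₁ * T))) := mul_le_mul_of_nonneg_left hcδ hcn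
          _ = δ * Real.exp (-(M₁ * T)) * c ^ n := by ring
          _ ≤ δ * Real.exp (-(M₁ * T)) * V (t0 + n * T) t0 z k := by
            apply mul_le_mul_of_nonneg_left (ih z k hz)
            positivity
          _ ≤ V ((t0 + n * T) + T) t0 a k := h1
  have hfin : ∀ i j : Fin m, c ^ (2 * m - 1)
      ≤ ∑ k, min (V (t0 + ((2 * m - 1 : ℕ) : ℝ) * T) t0 i k)
          (V (t0 + ((2 * m - 1 : ℕ) : ℝ) * T) t0 j k) := by
    intro i j
    obtain ⟨k, hk1, hk2⟩ := exists_common_ancestor hm H hroot i j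
    have h1 := key (2 * m - 1) i k hk1
    have h2 := key (2 * m - 1) j k hk2
    have hnT : (0:ℝ) ≤ ((2 * m - 1 : ℕ) : ℝ) * T := by positivity
    have hterm : c ^ (2 * m - 1) ≤ min (V (t0 + ((2 * m - 1 : ℕ) : ℝ) * T) t0 i k)
        (V (t0 + ((2 * m - 1 : ℕ) : ℝ) * T) t0 j k) := le_min h1 h2
    refine le_trans hterm (Finset.single_le_sum
      (f := fun k' => min (V (t0 + ((2 * m - 1 : ℕ) : ℝ) * T) t0 i k')
        (V (t0 + ((2 * m - 1 : ℕ) : ℝ) * T) t0 j k')) ?_ (Finset.mem_univ k))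
    intro k' _
    have hnn := vnonneg hM₁ hoff hdiag hbdd hV0 hVd ht0
      (by linarith : t0 ≤ t0 + ((2 * m - 1 : ℕ) : ℝ) * T)
    exact le_min (hnn i k') (hnn j k')
  have hinf : c ^ (2 * m - 1) ≤ ⨅ i : Fin m, ⨅ j : Fin m,
      ∑ k, min (V (t0 + ((2 * m - 1 : ℕ) : ℝ) * T) t0 i k)
        (V (t0 + ((2 * m - 1 : ℕ) : ℝ) * T) t0 j k) :=
    le_ciInf fun i => le_ciInf fun j => hfin i j
  have hhalf : c ^ (2 * m - 1) / 2 < c ^ (2 * m - 1) := by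
    have := pow_pos hcpos (2 * m - 1)
    linarith
  exact lt_of_lt_of_le hhalf hinf
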